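/- Let n ≥ 1, let U ⊆ ℝⁿ be open, let f : ℝⁿ → ℝⁿ be continuously differentiable on U with Jacobian J_f invertible at every point of U, let x₀ ∈ U, and let x : [0, ∞) → U be a differentiable curve satisfying the continuous Newton equation x′(t) = −J_f(x(t))⁻¹ f(x(t)) for all t ≥ 0, with x(0) = x₀. Then f(x(t)) = e^{−t} · f(x₀) for all t ≥ 0. -/

import Mathlib

/-- **Continuous Newton method**: if `x : [0,∞) → U` solves the continuous Newton
equation `x′(t) = -J_f(x(t))⁻¹ f(x(t))` with `x(0) = x₀`, where the Jacobian of `f`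
is invertible at every point of `U`, then `f(x(t)) = e^{-t} · f(x₀)` for all `t ≥ 0`. -/
theorem continuous_newton_residual_decay
    {n : ℕ} (hn : 1 ≤ n)
    (U : Set (EuclideanSpace ℝ (Fin n))) (hUopen : IsOpen U)
    (f : EuclideanSpace ℝ (Fin n) → EuclideanSpace ℝ (Fin n))
    (J : EuclideanSpace ℝ (Fin n) →
      (EuclideanSpace ℝ (Fin n) ≃L[ℝ] EuclideanSpace ℝ (Fin n)))
    (hf : ∀ y ∈ U, HasFDerivAt f
      ((J y : EuclideanSpace ℝ (Fin n) →L[ℝ] EuclideanSpace ℝ (Fin n))) y)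
    (hJcont : ContinuousOn
      (fun y => (J y : EuclideanSpace ℝ (Fin n) →L[ℝ] EuclideanSpace ℝ (Fin n))) U)
    (x₀ : EuclideanSpace ℝ (Fin n)) (hx₀ : x₀ ∈ U)
    (x : ℝ → EuclideanSpace ℝ (Fin n))
    (hmem : ∀ t : ℝ, 0 ≤ t → x t ∈ U)
    (hode : ∀ t : ℝ, 0 ≤ t →
      HasDerivWithinAt x (-((J (x t)).symm (f (x t)))) (Set.Ici 0) t)
    (hinit : x 0 = x₀) :
    ∀ t : ℝ, 0 ≤ t → f (x t) = Real.exp (-t) • f x₀ := by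
  set g : ℝ → EuclideanSpace ℝ (Fin n) := fun s => Real.exp s • f (x s) with hg
  have hderiv : ∀ s : ℝ, 0 ≤ s → HasDerivWithinAt g 0 (Set.Ici 0) s := by
    intro s hs
    have hxs := hmem s hs
    have hfd : HasDerivWithinAt (fun u => f (x u)) (-(f (x s))) (Set.Ici 0) s := by
      have h := (hf (x s) hxs).comp_hasDerivWithinAt s (hode s hs)
      simp at h
      exact h
    have hexp : HasDerivWithinAt Real.exp (Real.exp s) (Set.Ici 0) s :=
      (Real.hasDerivAt_exp s).hasDerivWithinAt
    have h := hexp.smul hfd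
    have h' : HasDerivWithinAt g (Real.exp s • -f (x s) + Real.exp s • f (x s)) (Set.Ici 0) s := h
    convert h' using 1
    simp
  intro t ht
  have hgconst : g t = g 0 := by
    have := constant_of_has_deriv_right_zero (f := g) (a := 0) (b := t)
      (fun s hs => ((hderiv s hs.1).continuousWithinAt).mono
        (Set.Icc_subset_Ici_self))
      (fun s hs => (hderiv s hs.1).mono (Set.Ici_subset_Ici.mpr hs.1))
    exact this t (Set.right_mem_Icc.mpr ht)
  have h0 : g 0 = f x₀ := by simp [hg, hinit]
  have : Real.exp t • f (x t) = f x₀ := by rw [← h0]; exact hgconst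
  have := congrArg (fun v => Real.exp (-t) • v) this
  simpa [smul_smul, ← Real.exp_add] using this
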